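/- For every pattern π ∈ Av(231), the following two identities hold: Σ_{σ ∈ Av(231)} 4^{−|σ|} · 𝟙{|σ| ≥ |π| and pat_{[1,|π|]}(σ) = π} = 2^{|RLMax(π)|+1}/2^{2|π|}, and Σ_{σ ∈ Av(231)} 4^{−|σ|} · 𝟙{|σ| ≥ |π| and pat_{[|σ|−|π|+1,|σ|]}(σ) = π} = 2^{|LRMax(π)|+1}/2^{2|π|}, where the sums range over 231-avoiding permutations of all sizes n ≥ 1. -/

import Mathlib

open Finset Filter
open scoped Topology Classical

noncomputable section

/-- The permutation 231 (as a permutation of `Fin 3`, 0-indexed). -/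
def perm231 : Equiv.Perm (Fin 3) := ⟨![1, 2, 0], ![2, 0, 1], by decide, by decide⟩

/-- The permutation 321 (as a permutation of `Fin 3`, 0-indexed). -/
def perm321 : Equiv.Perm (Fin 3) := ⟨![2, 1, 0], ![2, 1, 0], by decide, by decide⟩

/-- `σ` contains the pattern `π`: some (not necessarily consecutive) subsequence of `σ`
is in the same relative order as `π`. -/
def Contains {k n : ℕ} (π : Equiv.Perm (Fin k)) (σ : Equiv.Perm (Fin n)) : Prop :=
  ∃ f : Fin k → Fin n, StrictMono f ∧ ∀ a b : Fin k, σ (f a) < σ (f b) ↔ π a < π b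

/-- `σ` avoids the pattern `π`. -/
def Avoids {k n : ℕ} (π : Equiv.Perm (Fin k)) (σ : Equiv.Perm (Fin n)) : Prop := ¬ Contains π σ

/-- The set `Avⁿ(ρ)` of `ρ`-avoiding permutations of size `n`. -/
def AvSet {k : ℕ} (ρ : Equiv.Perm (Fin k)) (n : ℕ) : Finset (Equiv.Perm (Fin n)) :=
  Finset.univ.filter fun σ => Avoids ρ σ

/-- The (0-indexed) value of `σ` at the (0-indexed) position `j`, with junk value `0`
out of range. -/
def pv {n : ℕ} (σ : Equiv.Perm (Fin n)) (j : ℕ) : ℕ :=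
  if h : j < n then (σ ⟨j, h⟩ : ℕ) else 0

/-- The length-`k` window of `σ` starting at the (0-indexed) position `i` is in the same
relative order as `π`, i.e. `pat_{[i+1,i+k]}(σ) = π` (in the 1-indexed notation). -/
def WindowMatch {k n : ℕ} (π : Equiv.Perm (Fin k)) (σ : Equiv.Perm (Fin n)) (i : ℕ) : Prop :=
  ∀ a b : Fin k, (pv σ (i + a) < pv σ (i + b) ↔ π a < π b)

/-- `π` occurs consecutively in `σ` at the (0-indexed) position `i`. -/
def IsOccAt {k n : ℕ} (π : Equiv.Perm (Fin k)) (σ : Equiv.Perm (Fin n)) (i : ℕ) : Prop :=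
  i + k ≤ n ∧ WindowMatch π σ i

/-- Number of consecutive occurrences of `π` in the (0-indexed) window `[lo, hi)` of `σ`.
This equals `c-occ(π, pat_{[lo+1,hi]}(σ))` in the notation of the paper. -/
def cOccWin {k n : ℕ} (π : Equiv.Perm (Fin k)) (σ : Equiv.Perm (Fin n)) (lo hi : ℕ) : ℕ :=
  ((Finset.range n).filter fun i => lo ≤ i ∧ i + k ≤ hi ∧ WindowMatch π σ i).card

/-- `c-occ(π,σ)`: the number of consecutive occurrences of `π` in `σ`. -/
def cOcc {k n : ℕ} (π : Equiv.Perm (Fin k)) (σ : Equiv.Perm (Fin n)) : ℕ := cOccWin π σ 0 n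

/-- `|LRMax(π)|`: the number of left-to-right maxima of `π`. -/
def lrMax {k : ℕ} (π : Equiv.Perm (Fin k)) : ℕ :=
  (Finset.univ.filter fun i : Fin k => ∀ j : Fin k, j < i → π j < π i).card

/-- `|RLMax(π)|`: the number of right-to-left maxima of `π`. -/
def rlMax {k : ℕ} (π : Equiv.Perm (Fin k)) : ℕ :=
  (Finset.univ.filter fun i : Fin k => ∀ j : Fin k, i < j → π j < π i).card

/-- `P_231(π) = 2^(|LRMax(π)| + |RLMax(π)|) / 2^(2|π|)`. -/
def P231 {k : ℕ} (π : Equiv.Perm (Fin k)) : ℝ :=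
  2 ^ (lrMax π + rlMax π) / 2 ^ (2 * k)

end

noncomputable section AuxDev
variable {n : ℕ}

-- build a 231 occurrence
lemma mk231 {N : ℕ} (τ : Equiv.Perm (Fin N)) (p q r : Fin N)
    (hpq : p < q) (hqr : q < r) (h1 : τ r < τ p) (h2 : τ p < τ q) :
    Contains perm231 τ := by
  refine ⟨![p, q, r], ?_, ?_⟩
  · intro a b hab
    fin_cases a <;> fin_cases b <;> simp_all <;> omega
  · have h3 : τ r < τ q := h1.trans h2
    intro a b
    fin_cases a <;> fin_cases b <;>
      simp [perm231, Equiv.coe_fn_mk, Matrix.cons_val_zero, Matrix.cons_val_one] <;>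
      omega

-- destruct a 231 occurrence
lemma dest231 {N : ℕ} (τ : Equiv.Perm (Fin N)) (h : Contains perm231 τ) :
    ∃ p q r : Fin N, p < q ∧ q < r ∧ τ r < τ p ∧ τ p < τ q := by
  obtain ⟨f, hf, hiff⟩ := h
  refine ⟨f 0, f 1, f 2, hf (by decide), hf (by decide), ?_, ?_⟩
  · exact (hiff 2 0).2 (by decide)
  · exact (hiff 0 1).2 (by decide)


lemma succAbove_coe (v : Fin (n+1)) (w : Fin n) :
    ((v.succAbove w : Fin (n+1)) : ℕ) = if (w:ℕ) < v then (w:ℕ) else (w:ℕ)+1 := by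
  rw [Fin.succAbove]
  split_ifs with h1 h2 h2 <;> simp_all [Fin.lt_def, Fin.castSucc] <;> omega

lemma succAbove_lt_succAbove_iff (v : Fin (n+1)) (w w' : Fin n) :
    v.succAbove w < v.succAbove w' ↔ w < w' := by
  rw [Fin.lt_def, Fin.lt_def, succAbove_coe, succAbove_coe]
  split_ifs <;> omega

lemma lt_succAbove_iff' (v : Fin (n+1)) (w : Fin n) :
    v < v.succAbove w ↔ (v:ℕ) ≤ (w:ℕ) := by
  rw [Fin.lt_def, succAbove_coe]; split_ifs <;> omega

lemma succAbove_lt_iff' (v : Fin (n+1)) (w : Fin n) :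
    v.succAbove w < v ↔ (w:ℕ) < (v:ℕ) := by
  rw [Fin.lt_def, succAbove_coe]; split_ifs <;> omega

/-- append `v` at the end -/
noncomputable def appP (σ : Equiv.Perm (Fin n)) (v : Fin (n+1)) : Equiv.Perm (Fin (n+1)) :=
  Equiv.ofBijective (fun i => Fin.lastCases v (fun j => v.succAbove (σ j)) i)
    (Finite.injective_iff_bijective.mp <| by
      intro i1 i2
      induction i1 using Fin.lastCases with
      | last => induction i2 using Fin.lastCases with
        | last => simp
        | cast j =>
          simp only [Fin.lastCases_last, Fin.lastCases_castSucc]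
          exact fun h => absurd h.symm (Fin.succAbove_ne v (σ j))
      | cast j1 => induction i2 using Fin.lastCases with
        | last =>
          simp only [Fin.lastCases_last, Fin.lastCases_castSucc]
          exact fun h => absurd h (Fin.succAbove_ne v (σ j1))
        | cast j2 =>
          simp only [Fin.lastCases_castSucc]
          intro h
          have := σ.injective (v.succAbove_right_injective h)
          rw [this])

@[simp] lemma appP_castSucc (σ : Equiv.Perm (Fin n)) (v : Fin (n+1)) (i : Fin n) :
    appP σ v (Fin.castSucc i) = v.succAbove (σ i) := by
  simp [appP, Equiv.ofBijective]

@[simp] lemma appP_last (σ : Equiv.Perm (Fin n)) (v : Fin (n+1)) :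
    appP σ v (Fin.last n) = v := by
  simp [appP, Equiv.ofBijective]

/-- prepend `v` at the front -/
noncomputable def preP (σ : Equiv.Perm (Fin n)) (v : Fin (n+1)) : Equiv.Perm (Fin (n+1)) :=
  Equiv.ofBijective (fun i => Fin.cases v (fun j => v.succAbove (σ j)) i)
    (Finite.injective_iff_bijective.mp <| by
      intro i1 i2
      induction i1 using Fin.cases with
      | zero => induction i2 using Fin.cases with
        | zero => simp
        | succ j =>
          simp only [Fin.cases_zero, Fin.cases_succ]
          exact fun h => absurd h.symm (Fin.succAbove_ne v (σ j))
      | succ j1 => induction i2 using Fin.cases with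
        | zero =>
          simp only [Fin.cases_zero, Fin.cases_succ]
          exact fun h => absurd h (Fin.succAbove_ne v (σ j1))
        | succ j2 =>
          simp only [Fin.cases_succ]
          intro h
          have := σ.injective (v.succAbove_right_injective h)
          rw [this])

@[simp] lemma preP_succ (σ : Equiv.Perm (Fin n)) (v : Fin (n+1)) (i : Fin n) :
    preP σ v (Fin.succ i) = v.succAbove (σ i) := by
  simp [preP, Equiv.ofBijective]

@[simp] lemma preP_zero (σ : Equiv.Perm (Fin n)) (v : Fin (n+1)) :
    preP σ v 0 = v := by
  simp [preP, Equiv.ofBijective]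

lemma appP_bijective : Function.Bijective
    (fun p : Equiv.Perm (Fin n) × Fin (n+1) => appP p.1 p.2) := by
  rw [Fintype.bijective_iff_injective_and_card]
  constructor
  · rintro ⟨σ, v⟩ ⟨σ', v'⟩ h
    have hv : v = v' := by
      have := congrArg (fun τ : Equiv.Perm (Fin (n+1)) => τ (Fin.last n)) h
      simpa using this
    subst hv
    have hσ : σ = σ' := by
      ext i
      have := congrArg (fun τ : Equiv.Perm (Fin (n+1)) => τ (Fin.castSucc i)) h
      simp only [appP_castSucc] at this
      exact Fin.val_eq_of_eq (v.succAbove_right_injective this)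
    simp [hσ]
  · simp [Fintype.card_perm, Fintype.card_prod, Nat.factorial_succ, Fintype.card_fin, mul_comm]

lemma preP_bijective : Function.Bijective
    (fun p : Equiv.Perm (Fin n) × Fin (n+1) => preP p.1 p.2) := by
  rw [Fintype.bijective_iff_injective_and_card]
  constructor
  · rintro ⟨σ, v⟩ ⟨σ', v'⟩ h
    have hv : v = v' := by
      have := congrArg (fun τ : Equiv.Perm (Fin (n+1)) => τ 0) h
      simpa using this
    subst hv
    have hσ : σ = σ' := by
      ext i
      have := congrArg (fun τ : Equiv.Perm (Fin (n+1)) => τ (Fin.succ i)) h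
      simp only [preP_succ] at this
      exact Fin.val_eq_of_eq (v.succAbove_right_injective this)
    simp [hσ]
  · simp [Fintype.card_perm, Fintype.card_prod, Nat.factorial_succ, Fintype.card_fin, mul_comm]

def isRL (σ : Equiv.Perm (Fin n)) (i : Fin n) : Prop := ∀ j, i < j → σ j < σ i
def isLR (σ : Equiv.Perm (Fin n)) (i : Fin n) : Prop := ∀ j, j < i → σ j < σ i

def allowedA (σ : Equiv.Perm (Fin n)) (v : Fin (n+1)) : Prop :=
  ∀ i j : Fin n, i < j → σ i < σ j → (σ i : ℕ) < v

def allowedL (σ : Equiv.Perm (Fin n)) (v : Fin (n+1)) : Prop :=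
  ∀ i j : Fin n, i < j → (σ j : ℕ) < v → (σ i : ℕ) < v

lemma contains_appP (σ : Equiv.Perm (Fin n)) (v : Fin (n+1)) :
    Contains perm231 (appP σ v) ↔ Contains perm231 σ ∨ ¬ allowedA σ v := by
  constructor
  · intro h
    obtain ⟨p, q, r, hpq, hqr, h1, h2⟩ := dest231 _ h
    by_cases hr : (r : ℕ) < n
    · left
      have hq : (q : ℕ) < n := lt_trans hqr hr
      have hp : (p : ℕ) < n := lt_trans hpq hq
      set p' : Fin n := ⟨p, hp⟩; set q' : Fin n := ⟨q, hq⟩; set r' : Fin n := ⟨r, hr⟩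
      have ep : p = Fin.castSucc p' := by ext; rfl
      have eq' : q = Fin.castSucc q' := by ext; rfl
      have er : r = Fin.castSucc r' := by ext; rfl
      rw [ep, er, appP_castSucc, appP_castSucc, succAbove_lt_succAbove_iff] at h1
      rw [ep, eq', appP_castSucc, appP_castSucc, succAbove_lt_succAbove_iff] at h2
      exact mk231 σ p' q' r' hpq hqr h1 h2
    · right
      have hrl : r = Fin.last n := by ext; have := r.isLt; simp; omega
      have hq : (q : ℕ) < n := by have := hqr; rw [hrl] at this; exact this
      have hp : (p : ℕ) < n := lt_trans hpq hq
      set p' : Fin n := ⟨p, hp⟩; set q' : Fin n := ⟨q, hq⟩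
      have ep : p = Fin.castSucc p' := by ext; rfl
      have eq' : q = Fin.castSucc q' := by ext; rfl
      rw [hrl, ep, appP_last, appP_castSucc, lt_succAbove_iff'] at h1
      rw [ep, eq', appP_castSucc, appP_castSucc, succAbove_lt_succAbove_iff] at h2
      intro hA
      exact absurd (hA p' q' hpq h2) (not_lt.2 h1)
  · rintro (⟨f, hf, hiff⟩ | h)
    · refine ⟨fun a => Fin.castSucc (f a), fun a b hab => ?_, fun a b => ?_⟩
      · exact Fin.castSucc_lt_castSucc_iff.mpr (hf hab)
      · rw [appP_castSucc, appP_castSucc, succAbove_lt_succAbove_iff]; exact hiff a b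
    · have h' : ∃ i j : Fin n, i < j ∧ σ i < σ j ∧ (v:ℕ) ≤ ↑(σ i) := by
        by_contra hc
        push_neg at hc
        exact h (fun i j hij hs => (hc i j hij hs))
      obtain ⟨i, j, hij, hvij, hvi⟩ := h'
      refine mk231 _ (Fin.castSucc i) (Fin.castSucc j) (Fin.last n)
        (Fin.castSucc_lt_castSucc_iff.mpr hij) (Fin.castSucc_lt_last j) ?_ ?_
      · rw [appP_castSucc, appP_last, lt_succAbove_iff']; exact hvi
      · rw [appP_castSucc, appP_castSucc, succAbove_lt_succAbove_iff]; exact hvij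

lemma avoids_appP (σ : Equiv.Perm (Fin n)) (v : Fin (n+1)) :
    Avoids perm231 (appP σ v) ↔ Avoids perm231 σ ∧ allowedA σ v := by
  unfold Avoids; rw [contains_appP]; tauto

lemma contains_preP (σ : Equiv.Perm (Fin n)) (v : Fin (n+1)) :
    Contains perm231 (preP σ v) ↔ Contains perm231 σ ∨ ¬ allowedL σ v := by
  constructor
  · intro h
    obtain ⟨p, q, r, hpq, hqr, h1, h2⟩ := dest231 _ h
    by_cases hp : p = 0
    · right
      have hq : q ≠ 0 := by rintro rfl; exact absurd hpq (by simp [hp])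
      have hr : r ≠ 0 := by rintro rfl; exact absurd (hpq.trans hqr) (by simp [hp])
      set q' : Fin n := q.pred hq; set r' : Fin n := r.pred hr
      have eq' : q = Fin.succ q' := (Fin.succ_pred q hq).symm
      have er : r = Fin.succ r' := (Fin.succ_pred r hr).symm
      rw [hp, er, preP_zero, preP_succ, succAbove_lt_iff'] at h1
      rw [hp, eq', preP_zero, preP_succ, lt_succAbove_iff'] at h2
      have hqr' : q' < r' := by rw [eq', er, Fin.succ_lt_succ_iff] at hqr; exact hqr
      intro hA
      exact absurd (hA q' r' hqr' h1) (not_lt.2 h2)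
    · left
      have hp0 : (0:Fin (n+1)) < p := by
        rcases Fin.pos_iff_ne_zero.mpr hp with h; exact h
      have hq : q ≠ 0 := Fin.pos_iff_ne_zero.mp (hp0.trans hpq)
      have hr : r ≠ 0 := Fin.pos_iff_ne_zero.mp ((hp0.trans hpq).trans hqr)
      set p' : Fin n := p.pred hp; set q' : Fin n := q.pred hq; set r' : Fin n := r.pred hr
      have ep : p = Fin.succ p' := (Fin.succ_pred p hp).symm
      have eq' : q = Fin.succ q' := (Fin.succ_pred q hq).symm
      have er : r = Fin.succ r' := (Fin.succ_pred r hr).symm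
      rw [ep, er, preP_succ, preP_succ, succAbove_lt_succAbove_iff] at h1
      rw [ep, eq', preP_succ, preP_succ, succAbove_lt_succAbove_iff] at h2
      have hpq' : p' < q' := by rw [ep, eq', Fin.succ_lt_succ_iff] at hpq; exact hpq
      have hqr' : q' < r' := by rw [eq', er, Fin.succ_lt_succ_iff] at hqr; exact hqr
      exact mk231 σ p' q' r' hpq' hqr' h1 h2
  · rintro (⟨f, hf, hiff⟩ | h)
    · refine ⟨fun a => Fin.succ (f a), fun a b hab => ?_, fun a b => ?_⟩
      · exact Fin.succ_lt_succ_iff.mpr (hf hab)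
      · rw [preP_succ, preP_succ, succAbove_lt_succAbove_iff]; exact hiff a b
    · have h' : ∃ i j : Fin n, i < j ∧ (σ j:ℕ) < v ∧ (v:ℕ) ≤ ↑(σ i) := by
        by_contra hc
        push_neg at hc
        exact h (fun i j hij hs => (hc i j hij hs))
      obtain ⟨i, j, hij, hvj, hvi⟩ := h'
      refine mk231 _ 0 (Fin.succ i) (Fin.succ j) (Fin.succ_pos i) (Fin.succ_lt_succ_iff.mpr hij) ?_ ?_
      · rw [preP_zero, preP_succ, succAbove_lt_iff']; exact hvj
      · rw [preP_zero, preP_succ, lt_succAbove_iff']; exact hvi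

lemma avoids_preP (σ : Equiv.Perm (Fin n)) (v : Fin (n+1)) :
    Avoids perm231 (preP σ v) ↔ Avoids perm231 σ ∧ allowedL σ v := by
  unfold Avoids; rw [contains_preP]; tauto


lemma rlMax_eq (σ : Equiv.Perm (Fin n)) : rlMax σ = (univ.filter (isRL σ)).card := by unfold rlMax isRL; convert rfl
lemma lrMax_eq (σ : Equiv.Perm (Fin n)) : lrMax σ = (univ.filter (isLR σ)).card := by unfold lrMax isLR; convert rfl

lemma rl_gt {σ : Equiv.Perm (Fin n)} (hav : Avoids perm231 σ) {i l : Fin n}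
    (hi : ¬ isRL σ i) (hl : isRL σ l) : σ i < σ l := by
  unfold isRL at hi; push_neg at hi
  obtain ⟨j, hij, hji⟩ := hi
  have hsij : σ i < σ j := lt_of_le_of_ne hji (fun h => (ne_of_lt hij) (σ.injective h))
  by_contra hc
  push_neg at hc
  have hil : i ≠ l := by rintro rfl; exact absurd hsij (not_lt.2 (le_of_lt (hl j hij)))
  have hsli : σ l < σ i := lt_of_le_of_ne hc (fun h => hil.symm (σ.injective h))
  rcases lt_trichotomy l i with h | h | h
  · exact absurd (hl i h) (not_lt.2 (le_of_lt hsli))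
  · exact hil h.symm
  · rcases lt_trichotomy j l with h2 | h2 | h2
    · exact hav (mk231 σ i j l hij h2 hsli hsij)
    · rw [h2] at hsij; exact absurd (hsli.trans hsij) (lt_irrefl _)
    · exact absurd ((hl j h2).trans hsli) (not_lt.2 (le_of_lt hsij))

lemma isRL_iff_big {σ : Equiv.Perm (Fin n)} (hav : Avoids perm231 σ) (i : Fin n) :
    isRL σ i ↔ n ≤ (σ i : ℕ) + rlMax σ := by
  rw [rlMax_eq]
  set R := univ.filter (isRL σ) with hR
  constructor
  · intro hi
    have hsub : Finset.Ici (σ i) ⊆ R.image σ := by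
      intro y hy
      rw [Finset.mem_Ici] at hy
      have : σ (σ.symm y) = y := σ.apply_symm_apply y
      by_cases hj : isRL σ (σ.symm y)
      · exact Finset.mem_image.2 ⟨σ.symm y, by simp [hR, hj], this⟩
      · have h2 := rl_gt hav hj hi
        rw [this] at h2
        exact absurd h2 (not_lt.2 hy)
    have h1 : (Finset.Ici (σ i)).card ≤ R.card := by
      calc (Finset.Ici (σ i)).card ≤ (R.image σ).card := Finset.card_le_card hsub
        _ ≤ R.card := Finset.card_image_le
    rw [Fin.card_Ici] at h1
    have := (σ i).isLt
    omega
  · intro hbig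
    by_contra hi
    have hsub : R.image σ ⊆ Finset.Ioi (σ i) := by
      intro y hy
      rw [Finset.mem_image] at hy
      obtain ⟨l, hl, rfl⟩ := hy
      rw [hR, Finset.mem_filter] at hl
      exact Finset.mem_Ioi.2 (rl_gt hav hi hl.2)
    have h1 : R.card ≤ (Finset.Ioi (σ i)).card := by
      rw [← Finset.card_image_of_injective R σ.injective]
      exact Finset.card_le_card hsub
    rw [Fin.card_Ioi] at h1
    have h2 : (σ i : ℕ) < n := (σ i).isLt
    omega

lemma allowedA_iff {σ : Equiv.Perm (Fin n)} (hav : Avoids perm231 σ) (v : Fin (n+1)) :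
    allowedA σ v ↔ n ≤ (v : ℕ) + rlMax σ := by
  constructor
  · intro ha
    by_contra hlt
    push_neg at hlt
    have hv : (v:ℕ) < n := by omega
    set i := σ.symm ⟨(v:ℕ), hv⟩ with hi
    have hsi : σ i = ⟨(v:ℕ), hv⟩ := σ.apply_symm_apply _
    have hnRL : ¬ isRL σ i := by
      intro hRL
      rw [isRL_iff_big hav, hsi] at hRL
      simp at hRL; omega
    unfold isRL at hnRL; push_neg at hnRL
    obtain ⟨j, hij, hji⟩ := hnRL
    have hsij : σ i < σ j := lt_of_le_of_ne hji (fun h => (ne_of_lt hij) (σ.injective h))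
    have := ha i j hij hsij
    rw [hsi] at this
    simp at this
  · intro hb i j hij hsij
    have hnRL : ¬ isRL σ i := by
      intro hRL
      exact absurd (hRL j hij) (not_lt.2 (le_of_lt hsij))
    rw [isRL_iff_big hav] at hnRL
    push_neg at hnRL
    omega

lemma card_filter_fin_last (P : Fin (n+1) → Prop) :
    (univ.filter P).card
      = (univ.filter (fun i : Fin n => P (Fin.castSucc i))).card + (if P (Fin.last n) then 1 else 0) := by
  rw [Finset.card_filter, Finset.card_filter, Fin.sum_univ_castSucc]

lemma card_filter_fin_zero (P : Fin (n+1) → Prop) :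
    (univ.filter P).card
      = (univ.filter (fun i : Fin n => P (Fin.succ i))).card + (if P 0 then 1 else 0) := by
  rw [Finset.card_filter, Finset.card_filter, Fin.sum_univ_succ, add_comm]

lemma isRL_appP_castSucc (σ : Equiv.Perm (Fin n)) (v : Fin (n+1)) (i : Fin n) :
    isRL (appP σ v) (Fin.castSucc i) ↔ (isRL σ i ∧ (v:ℕ) ≤ σ i) := by
  constructor
  · intro h
    constructor
    · intro j hij
      have := h (Fin.castSucc j) (Fin.castSucc_lt_castSucc_iff.mpr hij)
      rw [appP_castSucc, appP_castSucc, succAbove_lt_succAbove_iff] at this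
      exact this
    · have := h (Fin.last n) (Fin.castSucc_lt_last i)
      rw [appP_last, appP_castSucc, lt_succAbove_iff'] at this
      exact this
  · rintro ⟨h1, h2⟩ j hj
    induction j using Fin.lastCases with
    | last =>
      rw [appP_castSucc, appP_last, lt_succAbove_iff']
      exact h2
    | cast j =>
      rw [appP_castSucc, appP_castSucc, succAbove_lt_succAbove_iff]
      exact h1 j (Fin.castSucc_lt_castSucc_iff.mp hj)

lemma isRL_appP_last (σ : Equiv.Perm (Fin n)) (v : Fin (n+1)) :
    isRL (appP σ v) (Fin.last n) := by
  intro j hj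
  exact absurd hj (not_lt.2 (Fin.le_last j))

lemma rlMax_appP (σ : Equiv.Perm (Fin n)) (v : Fin (n+1)) :
    rlMax (appP σ v) = (univ.filter (fun i : Fin n => isRL σ i ∧ (v:ℕ) ≤ σ i)).card + 1 := by
  rw [rlMax_eq, card_filter_fin_last (isRL (appP σ v))]
  congr 1
  · apply Finset.card_bij (fun i _ => i)
    · intro i hi
      rw [Finset.mem_filter] at hi ⊢
      exact ⟨Finset.mem_univ i, (isRL_appP_castSucc σ v i).mp hi.2⟩
    · intro a b _ _ h; exact h
    · intro b hb
      rw [Finset.mem_filter] at hb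
      exact ⟨b, Finset.mem_filter.2 ⟨Finset.mem_univ b, (isRL_appP_castSucc σ v b).mpr hb.2⟩, rfl⟩
  · simp [isRL_appP_last]

lemma card_val_ge (σ : Equiv.Perm (Fin n)) (v : Fin (n+1)) :
    (univ.filter (fun i : Fin n => (v:ℕ) ≤ σ i)).card + (v:ℕ) = n := by
  have hcc : (univ.filter (fun i : Fin n => (v:ℕ) ≤ σ i)).card
      = (univ.filter (fun y : Fin n => (v:ℕ) ≤ (y:ℕ))).card := by
    apply Finset.card_bij (fun i _ => σ i)
    · intro i hi
      rw [Finset.mem_filter] at hi ⊢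
      exact ⟨Finset.mem_univ _, hi.2⟩
    · intro a b _ _ h; exact σ.injective h
    · intro y hy
      rw [Finset.mem_filter] at hy
      exact ⟨σ.symm y, Finset.mem_filter.2 ⟨Finset.mem_univ _, by
        rw [σ.apply_symm_apply]; exact hy.2⟩, σ.apply_symm_apply y⟩
  rw [hcc]
  by_cases hv : (v:ℕ) < n
  · have he : (univ.filter (fun y : Fin n => (v:ℕ) ≤ (y:ℕ))) = Finset.Ici (⟨(v:ℕ), hv⟩ : Fin n) := by
      ext y; simp [Fin.le_def]
    rw [he, Fin.card_Ici]
    have hmk : ((⟨(v:ℕ), hv⟩ : Fin n) : ℕ) = (v:ℕ) := rfl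
    rw [hmk]
    omega
  · have hvn : (v:ℕ) = n := by have := v.isLt; omega
    have he : (univ.filter (fun y : Fin n => (v:ℕ) ≤ (y:ℕ))) = ∅ := by
      ext y; simp only [Finset.mem_filter, Finset.notMem_empty, iff_false]
      intro h
      have := y.isLt; omega
    rw [he]
    simp [hvn]

lemma rlMax_appP_allowed {σ : Equiv.Perm (Fin n)} (hav : Avoids perm231 σ) {v : Fin (n+1)}
    (ha : allowedA σ v) : rlMax (appP σ v) + (v:ℕ) = n + 1 := by
  rw [rlMax_appP]
  have he : (univ.filter (fun i : Fin n => isRL σ i ∧ (v:ℕ) ≤ σ i))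
      = (univ.filter (fun i : Fin n => (v:ℕ) ≤ σ i)) := by
    apply Finset.filter_congr
    intro i _
    rw [allowedA_iff hav] at ha
    constructor
    · exact fun h => h.2
    · intro h
      refine ⟨(isRL_iff_big hav i).mpr (by omega), h⟩
  rw [he]
  have := card_val_ge σ v
  omega

lemma fiber_count_A {σ : Equiv.Perm (Fin n)} (hav : Avoids perm231 σ) (r : ℕ) :
    (univ.filter (fun v : Fin (n+1) => allowedA σ v ∧ rlMax (appP σ v) = r)).card
      = if 1 ≤ r ∧ r ≤ rlMax σ + 1 then 1 else 0 := by
  split_ifs with hr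
  · rw [Finset.card_eq_one]
    have hwlt : n+1-r < n+1 := by omega
    refine ⟨⟨n+1-r, hwlt⟩, ?_⟩
    have hw : ((⟨n+1-r, hwlt⟩ : Fin (n+1)) : ℕ) = n+1-r := rfl
    ext v
    simp only [Finset.mem_filter, Finset.mem_univ, true_and, Finset.mem_singleton]
    constructor
    · rintro ⟨ha, hrl⟩
      have := rlMax_appP_allowed hav ha
      refine Fin.ext ?_
      rw [hw]
      omega
    · rintro rfl
      have hva : allowedA σ ⟨n+1-r, hwlt⟩ := by
        rw [allowedA_iff hav, hw]
        omega
      have h5 := rlMax_appP_allowed hav hva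
      rw [hw] at h5
      have hrn : rlMax σ ≤ n := by
        rw [rlMax_eq]
        exact (Finset.card_filter_le _ _).trans (by simp)
      exact ⟨hva, by omega⟩
  · rw [Finset.card_eq_zero]
    ext v
    simp only [Finset.mem_filter, Finset.mem_univ, true_and, Finset.notMem_empty, iff_false,
      not_and]
    intro ha hrl
    have h1 := rlMax_appP_allowed hav ha
    have h2 : (v:ℕ) ≤ n := by have := v.isLt; omega
    rw [allowedA_iff hav] at ha
    omega

lemma isLR_preP_succ (σ : Equiv.Perm (Fin n)) (v : Fin (n+1)) (i : Fin n) :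
    isLR (preP σ v) (Fin.succ i) ↔ (isLR σ i ∧ (v:ℕ) ≤ σ i) := by
  constructor
  · intro h
    constructor
    · intro j hij
      have := h (Fin.succ j) (Fin.succ_lt_succ_iff.mpr hij)
      rw [preP_succ, preP_succ, succAbove_lt_succAbove_iff] at this
      exact this
    · have := h 0 (Fin.succ_pos i)
      rw [preP_zero, preP_succ, lt_succAbove_iff'] at this
      exact this
  · rintro ⟨h1, h2⟩ j hj
    induction j using Fin.cases with
    | zero =>
      rw [preP_zero, preP_succ, lt_succAbove_iff']
      exact h2
    | succ j =>
      rw [preP_succ, preP_succ, succAbove_lt_succAbove_iff]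
      exact h1 j (Fin.succ_lt_succ_iff.mp hj)

lemma isLR_preP_zero (σ : Equiv.Perm (Fin n)) (v : Fin (n+1)) :
    isLR (preP σ v) 0 := by
  intro j hj
  exact absurd hj (not_lt.2 (Fin.zero_le j))

lemma lrMax_preP (σ : Equiv.Perm (Fin n)) (v : Fin (n+1)) :
    lrMax (preP σ v) = (univ.filter (fun i : Fin n => isLR σ i ∧ (v:ℕ) ≤ σ i)).card + 1 := by
  rw [lrMax_eq, card_filter_fin_zero (isLR (preP σ v))]
  congr 1
  · apply Finset.card_bij (fun i _ => i)
    · intro i hi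
      rw [Finset.mem_filter] at hi ⊢
      exact ⟨Finset.mem_univ i, (isLR_preP_succ σ v i).mp hi.2⟩
    · intro a b _ _ h; exact h
    · intro b hb
      rw [Finset.mem_filter] at hb
      exact ⟨b, Finset.mem_filter.2 ⟨Finset.mem_univ b, (isLR_preP_succ σ v b).mpr hb.2⟩, rfl⟩
  · simp [isLR_preP_zero]

lemma allowedL_iff {σ : Equiv.Perm (Fin n)} (hav : Avoids perm231 σ) (v : Fin (n+1)) :
    allowedL σ v ↔ ((v:ℕ) = 0 ∨ ∃ i, isLR σ i ∧ (σ i:ℕ) + 1 = (v:ℕ)) := by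
  constructor
  · intro al
    by_cases hv0 : (v:ℕ) = 0
    · exact Or.inl hv0
    · right
      have hv1 : (v:ℕ) - 1 < n := by have := v.isLt; omega
      set p := σ.symm ⟨(v:ℕ)-1, hv1⟩ with hp
      have hsp : σ p = ⟨(v:ℕ)-1, hv1⟩ := σ.apply_symm_apply _
      have hspv : (σ p : ℕ) = (v:ℕ) - 1 := by rw [hsp]
      refine ⟨p, ?_, by omega⟩
      intro i' hi'
      have h1 : (σ i' : ℕ) < v := al i' p hi' (by omega)
      have h2 : σ i' ≠ σ p := fun h => (ne_of_lt hi') (σ.injective h)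
      rw [Fin.lt_def]
      rw [Fin.ne_iff_vne] at h2
      omega
  · rintro (hv0 | ⟨p, hLR, hpv⟩)
    · intro i j _ hj
      omega
    · intro i j hij hjv
      by_contra hc
      push_neg at hc
      have hpi : (σ p : ℕ) < σ i := by omega
      have hip : p ≠ i := fun h => by rw [h] at hpi; omega
      have hpi' : p < i := by
        rcases lt_or_gt_of_ne hip with h | h
        · exact h
        · exact absurd (hLR i h) (by rw [Fin.lt_def]; omega)
      have hjp : (σ j : ℕ) < σ p := by
        have hjne : σ j ≠ σ p := fun h => (ne_of_lt (hpi'.trans hij)).symm (σ.injective h)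
        rw [Fin.ne_iff_vne] at hjne
        omega
      exact hav (mk231 σ p i j hpi' hij (by rw [Fin.lt_def]; omega) (by rw [Fin.lt_def]; omega))

def cL (σ : Equiv.Perm (Fin n)) (v : Fin (n+1)) : ℕ :=
  (univ.filter (fun i : Fin n => isLR σ i ∧ (v:ℕ) ≤ σ i)).card

lemma cL_le (σ : Equiv.Perm (Fin n)) (v : Fin (n+1)) : cL σ v ≤ lrMax σ := by
  rw [lrMax_eq]
  apply Finset.card_le_card
  intro i hi
  rw [Finset.mem_filter] at hi ⊢
  exact ⟨hi.1, hi.2.1⟩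

lemma cL_strict {σ : Equiv.Perm (Fin n)} (hav : Avoids perm231 σ) {v v' : Fin (n+1)}
    (hal' : allowedL σ v') (h : v < v') : cL σ v' < cL σ v := by
  rw [allowedL_iff hav] at hal'
  have hv'0 : (v':ℕ) ≠ 0 := by
    rw [Fin.lt_def] at h; omega
  rcases hal' with h0 | ⟨p, hLR, hpv⟩
  · omega
  · apply Finset.card_lt_card
    constructor
    · intro i hi
      rw [Finset.mem_filter] at hi ⊢
      rw [Fin.lt_def] at h
      exact ⟨hi.1, hi.2.1, by have := hi.2.2; omega⟩
    · intro hsub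
      have hpmem : p ∈ univ.filter (fun i : Fin n => isLR σ i ∧ (v:ℕ) ≤ σ i) := by
        rw [Finset.mem_filter]
        rw [Fin.lt_def] at h
        exact ⟨Finset.mem_univ _, hLR, by omega⟩
      have := hsub hpmem
      rw [Finset.mem_filter] at this
      omega

lemma cL_injOn {σ : Equiv.Perm (Fin n)} (hav : Avoids perm231 σ) {v v' : Fin (n+1)}
    (hal : allowedL σ v) (hal' : allowedL σ v') (h : cL σ v = cL σ v') : v = v' := by
  rcases lt_trichotomy v v' with hlt | heq | hgt
  · exact absurd h (ne_of_gt (cL_strict hav hal' hlt))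
  · exact heq
  · exact absurd h (ne_of_lt (cL_strict hav hal hgt))

lemma card_allowedL {σ : Equiv.Perm (Fin n)} (hav : Avoids perm231 σ) :
    (univ.filter (allowedL σ)).card = lrMax σ + 1 := by
  have he : univ.filter (allowedL σ)
      = insert (0 : Fin (n+1)) ((univ.filter (isLR σ)).image (fun i => (σ i).succ)) := by
    ext v
    rw [Finset.mem_filter, Finset.mem_insert, Finset.mem_image]
    rw [allowedL_iff hav]
    constructor
    · rintro ⟨-, h0 | ⟨p, hLR, hpv⟩⟩
      · left; exact Fin.ext (by simpa using h0)
      · right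
        exact ⟨p, Finset.mem_filter.2 ⟨Finset.mem_univ _, hLR⟩, Fin.ext (by simpa using hpv)⟩
    · rintro (rfl | ⟨p, hp, rfl⟩)
      · exact ⟨Finset.mem_univ _, Or.inl rfl⟩
      · rw [Finset.mem_filter] at hp
        exact ⟨Finset.mem_univ _, Or.inr ⟨p, hp.2, by simp⟩⟩
  rw [he, Finset.card_insert_of_notMem, Finset.card_image_of_injective _
    (fun a b hab => σ.injective (Fin.succ_injective _ hab)), ← lrMax_eq, add_comm]
  intro hmem
  rw [Finset.mem_image] at hmem
  obtain ⟨p, -, hp⟩ := hmem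
  exact Fin.succ_ne_zero _ hp

lemma image_cL {σ : Equiv.Perm (Fin n)} (hav : Avoids perm231 σ) :
    (univ.filter (allowedL σ)).image (cL σ) = Finset.range (lrMax σ + 1) := by
  apply Finset.eq_of_subset_of_card_le
  · intro t ht
    rw [Finset.mem_image] at ht
    obtain ⟨v, -, rfl⟩ := ht
    rw [Finset.mem_range]
    exact Nat.lt_succ_of_le (cL_le σ v)
  · rw [Finset.card_range, Finset.card_image_of_injOn, card_allowedL hav]
    intro v hv v' hv' h
    rw [Finset.mem_coe, Finset.mem_filter] at hv hv'
    exact cL_injOn hav hv.2 hv'.2 h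

lemma fiber_count_L {σ : Equiv.Perm (Fin n)} (hav : Avoids perm231 σ) (r : ℕ) :
    (univ.filter (fun v : Fin (n+1) => allowedL σ v ∧ lrMax (preP σ v) = r)).card
      = if 1 ≤ r ∧ r ≤ lrMax σ + 1 then 1 else 0 := by
  have hpre : ∀ v : Fin (n+1), lrMax (preP σ v) = cL σ v + 1 := fun v => lrMax_preP σ v
  split_ifs with hr
  · have hmem : r - 1 ∈ (univ.filter (allowedL σ)).image (cL σ) := by
      rw [image_cL hav, Finset.mem_range]; omega
    rw [Finset.mem_image] at hmem
    obtain ⟨v, hv, hcv⟩ := hmem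
    rw [Finset.mem_filter] at hv
    rw [Finset.card_eq_one]
    refine ⟨v, ?_⟩
    ext v'
    rw [Finset.mem_filter, Finset.mem_singleton]
    constructor
    · rintro ⟨-, hal', hlr'⟩
      rw [hpre] at hlr'
      exact cL_injOn hav hal' hv.2 (by omega)
    · rintro rfl
      exact ⟨Finset.mem_univ _, hv.2, by rw [hpre]; omega⟩
  · rw [Finset.card_eq_zero]
    ext v
    rw [Finset.mem_filter]
    simp only [Finset.notMem_empty, iff_false, not_and]
    intro _ hal hlr
    rw [hpre] at hlr
    have := cL_le σ v
    omega

lemma pv_appP (σ : Equiv.Perm (Fin n)) (v : Fin (n+1)) {j : ℕ} (hj : j < n) :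
    pv (appP σ v) j = ((v.succAbove (σ ⟨j, hj⟩)) : ℕ) := by
  unfold pv
  rw [dif_pos (by omega : j < n+1)]
  congr 1
  have : (⟨j, by omega⟩ : Fin (n+1)) = Fin.castSucc ⟨j, hj⟩ := rfl
  rw [this, appP_castSucc]

lemma pv_preP (σ : Equiv.Perm (Fin n)) (v : Fin (n+1)) {j : ℕ} (hj : j < n) :
    pv (preP σ v) (j+1) = ((v.succAbove (σ ⟨j, hj⟩)) : ℕ) := by
  unfold pv
  rw [dif_pos (show j+1 < n+1 by omega)]
  have e : (⟨j+1, show j+1 < n+1 by omega⟩ : Fin (n+1)) = Fin.succ ⟨j, hj⟩ := rfl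
  rw [e, preP_succ]

lemma succAbove_val_lt (v : Fin (n+1)) (w w' : Fin n) :
    ((v.succAbove w : Fin (n+1)) : ℕ) < ((v.succAbove w' : Fin (n+1)) : ℕ) ↔ (w:ℕ) < (w':ℕ) := by
  rw [← Fin.lt_def, ← Fin.lt_def, succAbove_lt_succAbove_iff]

lemma occAt0_appP {k : ℕ} (π : Equiv.Perm (Fin k)) (σ : Equiv.Perm (Fin n)) (v : Fin (n+1))
    (hkn : k ≤ n) : IsOccAt π (appP σ v) 0 ↔ IsOccAt π σ 0 := by
  unfold IsOccAt WindowMatch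
  have h1 : (0:ℕ) + k ≤ n + 1 := by omega
  have h2 : (0:ℕ) + k ≤ n := by omega
  simp only [h1, h2, true_and]
  have key : ∀ a b : Fin k, (pv (appP σ v) (0 + a) < pv (appP σ v) (0 + b)
      ↔ pv σ (0 + a) < pv σ (0 + b)) := by
    intro a b
    have ha : (0:ℕ) + (a:ℕ) < n := by have := a.isLt; omega
    have hb : (0:ℕ) + (b:ℕ) < n := by have := b.isLt; omega
    rw [pv_appP σ v ha, pv_appP σ v hb, succAbove_val_lt]
    unfold pv
    rw [dif_pos ha, dif_pos hb]
  constructor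
  · intro h a b; rw [← key a b]; exact h a b
  · intro h a b; rw [key a b]; exact h a b

lemma occAt_preP {k : ℕ} (π : Equiv.Perm (Fin k)) (σ : Equiv.Perm (Fin n)) (v : Fin (n+1))
    (hkn : k ≤ n) : IsOccAt π (preP σ v) (n+1-k) ↔ IsOccAt π σ (n-k) := by
  unfold IsOccAt WindowMatch
  have h1 : (n+1-k) + k ≤ n + 1 := by omega
  have h2 : (n-k) + k ≤ n := by omega
  simp only [h1, h2, true_and]
  have key : ∀ a b : Fin k, (pv (preP σ v) (n+1-k + a) < pv (preP σ v) (n+1-k + b)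
      ↔ pv σ (n-k + a) < pv σ (n-k + b)) := by
    intro a b
    have ha : (n-k) + (a:ℕ) < n := by have := a.isLt; omega
    have hb : (n-k) + (b:ℕ) < n := by have := b.isLt; omega
    have ea : n+1-k + (a:ℕ) = ((n-k) + (a:ℕ)) + 1 := by omega
    have eb : n+1-k + (b:ℕ) = ((n-k) + (b:ℕ)) + 1 := by omega
    rw [ea, eb, pv_preP σ v ha, pv_preP σ v hb, succAbove_val_lt]
    unfold pv
    rw [dif_pos ha, dif_pos hb]
  constructor
  · intro h a b; rw [← key a b]; exact h a b
  · intro h a b; rw [key a b]; exact h a b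

lemma occAt_self {k : ℕ} (π : Equiv.Perm (Fin k)) : IsOccAt π π 0 := by
  refine ⟨by omega, fun a b => ?_⟩
  unfold pv
  have ha : (0:ℕ) + (a:ℕ) < k := by have := a.isLt; omega
  have hb : (0:ℕ) + (b:ℕ) < k := by have := b.isLt; omega
  rw [dif_pos ha, dif_pos hb]
  have ea : (⟨0 + (a:ℕ), ha⟩ : Fin k) = a := by ext; simp
  have eb : (⟨0 + (b:ℕ), hb⟩ : Fin k) = b := by ext; simp
  rw [ea, eb, ← Fin.lt_def]

lemma occAt_eq {k : ℕ} (π σ : Equiv.Perm (Fin k)) (h : IsOccAt π σ 0) : σ = π := by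
  obtain ⟨-, hw⟩ := h
  have hiff : ∀ a b : Fin k, (σ a < σ b ↔ π a < π b) := by
    intro a b
    have ha : (0:ℕ) + (a:ℕ) < k := by have := a.isLt; omega
    have hb : (0:ℕ) + (b:ℕ) < k := by have := b.isLt; omega
    have := hw a b
    unfold pv at this
    rw [dif_pos ha, dif_pos hb] at this
    have ea : (⟨0 + (a:ℕ), ha⟩ : Fin k) = a := by ext; simp
    have eb : (⟨0 + (b:ℕ), hb⟩ : Fin k) = b := by ext; simp
    rw [ea, eb, ← Fin.lt_def] at this
    exact this
  have hmono : StrictMono (fun x => σ (π.symm x)) := by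
    intro x y hxy
    have : π (π.symm x) < π (π.symm y) := by
      rw [π.apply_symm_apply, π.apply_symm_apply]; exact hxy
    exact (hiff _ _).mpr this
  have hrange : Set.range (fun x => σ (π.symm x)) = Set.range (id : Fin k → Fin k) := by
    rw [Set.range_id]
    exact Set.range_eq_univ.mpr (fun y => ⟨π (σ.symm y), by simp⟩)
  have := (StrictMono.range_inj hmono strictMono_id).mp hrange
  ext i
  have := congrFun this (π i)
  simp only [Equiv.symm_apply_apply, id] at this
  rw [this]

def NA {k : ℕ} (π : Equiv.Perm (Fin k)) (n r : ℕ) : ℕ :=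
  (univ.filter (fun σ : Equiv.Perm (Fin n) =>
    Avoids perm231 σ ∧ IsOccAt π σ 0 ∧ rlMax σ = r)).card

def NL {k : ℕ} (π : Equiv.Perm (Fin k)) (n r : ℕ) : ℕ :=
  (univ.filter (fun σ : Equiv.Perm (Fin n) =>
    Avoids perm231 σ ∧ IsOccAt π σ (n - k) ∧ lrMax σ = r)).card

lemma card_via_appP (P : Equiv.Perm (Fin (n+1)) → Prop) :
    (univ.filter P).card
      = ∑ σ : Equiv.Perm (Fin n), (univ.filter (fun v : Fin (n+1) => P (appP σ v))).card := by
  rw [Finset.card_filter]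
  rw [← Fintype.sum_bijective _ appP_bijective _ (fun τ => if P τ then 1 else 0) (fun p => rfl)]
  rw [Fintype.sum_prod_type]
  simp only [Finset.card_filter]

lemma card_via_preP (P : Equiv.Perm (Fin (n+1)) → Prop) :
    (univ.filter P).card
      = ∑ σ : Equiv.Perm (Fin n), (univ.filter (fun v : Fin (n+1) => P (preP σ v))).card := by
  rw [Finset.card_filter]
  rw [← Fintype.sum_bijective _ preP_bijective _ (fun τ => if P τ then 1 else 0) (fun p => rfl)]
  rw [Fintype.sum_prod_type]
  simp only [Finset.card_filter]

lemma rlMax_le (σ : Equiv.Perm (Fin n)) : rlMax σ ≤ n := by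
  rw [rlMax_eq]
  exact (Finset.card_filter_le _ _).trans (by simp)

lemma lrMax_le (σ : Equiv.Perm (Fin n)) : lrMax σ ≤ n := by
  rw [lrMax_eq]
  exact (Finset.card_filter_le _ _).trans (by simp)

lemma NA_base {k : ℕ} (π : Equiv.Perm (Fin k)) (hπ : Avoids perm231 π) (r : ℕ) :
    NA π k r = if r = rlMax π then 1 else 0 := by
  unfold NA
  split_ifs with hr
  · rw [Finset.card_eq_one]
    refine ⟨π, ?_⟩
    ext σ
    rw [Finset.mem_filter, Finset.mem_singleton]
    constructor
    · rintro ⟨-, -, hocc, -⟩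
      exact occAt_eq π σ hocc
    · rintro rfl
      exact ⟨Finset.mem_univ _, hπ, occAt_self _, by omega⟩
  · rw [Finset.card_eq_zero]
    ext σ
    rw [Finset.mem_filter]
    simp only [Finset.notMem_empty, iff_false, not_and]
    intro _ _ hocc hrl
    exact hr (by rw [← hrl, occAt_eq π σ hocc])

lemma NL_base {k : ℕ} (π : Equiv.Perm (Fin k)) (hπ : Avoids perm231 π) (r : ℕ) :
    NL π k r = if r = lrMax π then 1 else 0 := by
  unfold NL
  have hkk : k - k = 0 := by omega
  rw [hkk]
  split_ifs with hr
  · rw [Finset.card_eq_one]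
    refine ⟨π, ?_⟩
    ext σ
    rw [Finset.mem_filter, Finset.mem_singleton]
    constructor
    · rintro ⟨-, -, hocc, -⟩
      exact occAt_eq π σ hocc
    · rintro rfl
      exact ⟨Finset.mem_univ _, hπ, occAt_self _, by omega⟩
  · rw [Finset.card_eq_zero]
    ext σ
    rw [Finset.mem_filter]
    simp only [Finset.notMem_empty, iff_false, not_and]
    intro _ _ hocc hrl
    exact hr (by rw [← hrl, occAt_eq π σ hocc])

lemma NA_step {k : ℕ} (π : Equiv.Perm (Fin k)) (hkn : k ≤ n) (r : ℕ) :
    NA π (n+1) r = if 1 ≤ r then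
      ∑ j ∈ Finset.Icc (r-1) n, NA π n j else 0 := by
  have h0 : NA π (n+1) r = ∑ σ : Equiv.Perm (Fin n),
      (univ.filter (fun v : Fin (n+1) => Avoids perm231 (appP σ v)
        ∧ IsOccAt π (appP σ v) 0 ∧ rlMax (appP σ v) = r)).card := by
    unfold NA
    convert card_via_appP (fun τ => Avoids perm231 τ ∧ IsOccAt π τ 0 ∧ rlMax τ = r) using 2 <;> congr!
  rw [h0]
  have hfib : ∀ σ : Equiv.Perm (Fin n),
      (univ.filter (fun v : Fin (n+1) => Avoids perm231 (appP σ v)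
        ∧ IsOccAt π (appP σ v) 0 ∧ rlMax (appP σ v) = r)).card
      = if Avoids perm231 σ ∧ IsOccAt π σ 0 then
          (if 1 ≤ r ∧ r ≤ rlMax σ + 1 then 1 else 0) else 0 := by
    intro σ
    by_cases hC : Avoids perm231 σ ∧ IsOccAt π σ 0
    · rw [if_pos hC, ← fiber_count_A hC.1 r]
      congr 1
      apply Finset.filter_congr
      intro v _
      rw [avoids_appP, occAt0_appP π σ v hkn]
      constructor
      · rintro ⟨⟨-, ha⟩, -, hrl⟩; exact ⟨ha, hrl⟩
      · rintro ⟨ha, hrl⟩; exact ⟨⟨hC.1, ha⟩, hC.2, hrl⟩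
    · rw [if_neg hC, Finset.card_eq_zero, Finset.filter_eq_empty_iff]
      intro v _
      rw [avoids_appP, occAt0_appP π σ v hkn]
      rintro ⟨⟨hav, -⟩, hocc, -⟩
      exact hC ⟨hav, hocc⟩
  rw [Finset.sum_congr rfl (fun σ _ => hfib σ)]
  split_ifs with hr
  · have hstep : ∑ σ : Equiv.Perm (Fin n), (if Avoids perm231 σ ∧ IsOccAt π σ 0 then
          (if 1 ≤ r ∧ r ≤ rlMax σ + 1 then 1 else 0) else 0)
        = (univ.filter (fun σ : Equiv.Perm (Fin n) =>
            (Avoids perm231 σ ∧ IsOccAt π σ 0) ∧ r ≤ rlMax σ + 1)).card := by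
      rw [Finset.card_filter]
      apply Finset.sum_congr rfl
      intro σ _
      by_cases h1 : Avoids perm231 σ ∧ IsOccAt π σ 0 <;>
        by_cases h2 : r ≤ rlMax σ + 1 <;> simp [h1, h2, hr]
    rw [hstep]
    rw [Finset.card_eq_sum_card_fiberwise
      (f := fun σ : Equiv.Perm (Fin n) => rlMax σ) (t := Finset.Icc (r-1) n)
      (by intro σ hσ
          rw [Finset.mem_coe, Finset.mem_filter] at hσ
          obtain ⟨-, -, h2⟩ := hσ
          show rlMax σ ∈ Finset.Icc (r-1) n
          rw [Finset.mem_Icc]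
          exact ⟨by omega, rlMax_le σ⟩)]
    apply Finset.sum_congr rfl
    intro j hj
    rw [Finset.mem_Icc] at hj
    rw [Finset.filter_filter]
    unfold NA
    congr 1
    apply Finset.filter_congr
    intro σ _
    constructor
    · rintro ⟨⟨⟨hA, hO⟩, -⟩, h3⟩; exact ⟨hA, hO, h3⟩
    · rintro ⟨hA, hO, h3⟩
      exact ⟨⟨⟨hA, hO⟩, by omega⟩, h3⟩
  · apply Finset.sum_eq_zero
    intro σ _
    by_cases h1 : Avoids perm231 σ ∧ IsOccAt π σ 0 <;> simp [h1, hr]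

lemma NL_step {k : ℕ} (π : Equiv.Perm (Fin k)) (hkn : k ≤ n) (r : ℕ) :
    NL π (n+1) r = if 1 ≤ r then
      ∑ j ∈ Finset.Icc (r-1) n, NL π n j else 0 := by
  have h0 : NL π (n+1) r = ∑ σ : Equiv.Perm (Fin n),
      (univ.filter (fun v : Fin (n+1) => Avoids perm231 (preP σ v)
        ∧ IsOccAt π (preP σ v) (n+1-k) ∧ lrMax (preP σ v) = r)).card := by
    unfold NL
    convert card_via_preP (fun τ => Avoids perm231 τ ∧ IsOccAt π τ (n+1-k) ∧ lrMax τ = r) using 2 <;> congr!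
  rw [h0]
  have hfib : ∀ σ : Equiv.Perm (Fin n),
      (univ.filter (fun v : Fin (n+1) => Avoids perm231 (preP σ v)
        ∧ IsOccAt π (preP σ v) (n+1-k) ∧ lrMax (preP σ v) = r)).card
      = if Avoids perm231 σ ∧ IsOccAt π σ (n-k) then
          (if 1 ≤ r ∧ r ≤ lrMax σ + 1 then 1 else 0) else 0 := by
    intro σ
    by_cases hC : Avoids perm231 σ ∧ IsOccAt π σ (n-k)
    · rw [if_pos hC, ← fiber_count_L hC.1 r]
      congr 1
      apply Finset.filter_congr
      intro v _
      rw [avoids_preP, occAt_preP π σ v hkn]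
      constructor
      · rintro ⟨⟨-, ha⟩, -, hrl⟩; exact ⟨ha, hrl⟩
      · rintro ⟨ha, hrl⟩; exact ⟨⟨hC.1, ha⟩, hC.2, hrl⟩
    · rw [if_neg hC, Finset.card_eq_zero, Finset.filter_eq_empty_iff]
      intro v _
      rw [avoids_preP, occAt_preP π σ v hkn]
      rintro ⟨⟨hav, -⟩, hocc, -⟩
      exact hC ⟨hav, hocc⟩
  rw [Finset.sum_congr rfl (fun σ _ => hfib σ)]
  split_ifs with hr
  · have hstep : ∑ σ : Equiv.Perm (Fin n), (if Avoids perm231 σ ∧ IsOccAt π σ (n-k) then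
          (if 1 ≤ r ∧ r ≤ lrMax σ + 1 then 1 else 0) else 0)
        = (univ.filter (fun σ : Equiv.Perm (Fin n) =>
            (Avoids perm231 σ ∧ IsOccAt π σ (n-k)) ∧ r ≤ lrMax σ + 1)).card := by
      rw [Finset.card_filter]
      apply Finset.sum_congr rfl
      intro σ _
      by_cases h1 : Avoids perm231 σ ∧ IsOccAt π σ (n-k) <;>
        by_cases h2 : r ≤ lrMax σ + 1 <;> simp [h1, h2, hr]
    rw [hstep]
    rw [Finset.card_eq_sum_card_fiberwise
      (f := fun σ : Equiv.Perm (Fin n) => lrMax σ) (t := Finset.Icc (r-1) n)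
      (by intro σ hσ
          rw [Finset.mem_coe, Finset.mem_filter] at hσ
          obtain ⟨-, -, h2⟩ := hσ
          show lrMax σ ∈ Finset.Icc (r-1) n
          rw [Finset.mem_Icc]
          exact ⟨by omega, lrMax_le σ⟩)]
    apply Finset.sum_congr rfl
    intro j hj
    rw [Finset.mem_Icc] at hj
    rw [Finset.filter_filter]
    unfold NL
    congr 1
    apply Finset.filter_congr
    intro σ _
    constructor
    · rintro ⟨⟨⟨hA, hO⟩, -⟩, h3⟩; exact ⟨hA, hO, h3⟩
    · rintro ⟨hA, hO, h3⟩
      exact ⟨⟨⟨hA, hO⟩, by omega⟩, h3⟩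
  · apply Finset.sum_eq_zero
    intro σ _
    by_cases h1 : Avoids perm231 σ ∧ IsOccAt π σ (n-k) <;> simp [h1, hr]

def fseq (r0 : ℕ) : ℕ → ℕ → ℕ
  | 0, r => if r = r0 then 1 else 0
  | m+1, r => if 1 ≤ r then ∑ j ∈ Finset.Icc (r-1) (r0+m), fseq r0 m j else 0

lemma fseq_vanish (r0 : ℕ) : ∀ m r, r0 + m < r → fseq r0 m r = 0 := by
  intro m
  induction m with
  | zero => intro r hr; simp only [fseq]; rw [if_neg]; omega
  | succ m ih =>
    intro r hr
    simp only [fseq]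
    split_ifs with h1
    · apply Finset.sum_eq_zero
      intro j hj
      rw [Finset.mem_Icc] at hj
      omega
    · rfl

lemma NA_eq {k : ℕ} (π : Equiv.Perm (Fin k)) (hπ : Avoids perm231 π) :
    ∀ m r, NA π (k+m) r = fseq (rlMax π) m r := by
  have hr0k : rlMax π ≤ k := rlMax_le π
  intro m
  induction m with
  | zero => intro r; simpa [fseq] using NA_base π hπ r
  | succ m ih =>
    intro r
    have hstep := NA_step π (show k ≤ k + m by omega) r
    rw [show k + (m+1) = (k+m)+1 by omega, hstep]
    simp only [fseq]
    split_ifs with h1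
    · rw [Finset.sum_congr rfl (fun j _ => ih j)]
      symm
      apply Finset.sum_subset
      · apply Finset.Icc_subset_Icc_right; omega
      · intro j hj hj2
        rw [Finset.mem_Icc] at hj hj2
        exact fseq_vanish _ m j (by omega)
    · rfl

lemma NL_eq {k : ℕ} (π : Equiv.Perm (Fin k)) (hπ : Avoids perm231 π) :
    ∀ m r, NL π (k+m) r = fseq (lrMax π) m r := by
  have hr0k : lrMax π ≤ k := lrMax_le π
  intro m
  induction m with
  | zero => intro r; simpa [fseq] using NL_base π hπ r
  | succ m ih =>
    intro r
    have hstep := NL_step π (show k ≤ k + m by omega) r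
    rw [show k + (m+1) = (k+m)+1 by omega, hstep]
    simp only [fseq]
    split_ifs with h1
    · rw [Finset.sum_congr rfl (fun j _ => ih j)]
      symm
      apply Finset.sum_subset
      · apply Finset.Icc_subset_Icc_right; omega
      · intro j hj hj2
        rw [Finset.mem_Icc] at hj hj2
        exact fseq_vanish _ m j (by omega)
    · rfl

def gseq (m r0 : ℕ) : ℕ := ∑ r ∈ Finset.range (r0+m+1), fseq r0 m r

lemma gseq_zero (r0 : ℕ) : gseq 0 r0 = 1 := by
  unfold gseq
  simp only [fseq]
  rw [Finset.sum_ite_eq' (Finset.range (r0+0+1)) r0 (fun _ => 1)]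
  rw [if_pos (by rw [Finset.mem_range]; omega)]

lemma NAtot {k : ℕ} (π : Equiv.Perm (Fin k)) (hπ : Avoids perm231 π) (m : ℕ) :
    (univ.filter (fun σ : Equiv.Perm (Fin (k+m)) =>
      Avoids perm231 σ ∧ IsOccAt π σ 0)).card = gseq m (rlMax π) := by
  have hr0k : rlMax π ≤ k := rlMax_le π
  rw [Finset.card_eq_sum_card_fiberwise
    (f := fun σ : Equiv.Perm (Fin (k+m)) => rlMax σ) (t := Finset.range (k+m+1))
    (by intro σ _
        show rlMax σ ∈ Finset.range (k+m+1)
        rw [Finset.mem_range]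
        exact Nat.lt_succ_of_le (rlMax_le σ))]
  have h1 : ∀ j ∈ Finset.range (k+m+1),
      ((univ.filter (fun σ : Equiv.Perm (Fin (k+m)) =>
        Avoids perm231 σ ∧ IsOccAt π σ 0)).filter
          (fun σ => rlMax σ = j)).card = fseq (rlMax π) m j := by
    intro j _
    rw [← NA_eq π hπ m j]
    unfold NA
    rw [Finset.filter_filter]
    congr 1
    apply Finset.filter_congr
    intro σ _
    constructor
    · rintro ⟨⟨h1, h2⟩, h3⟩; exact ⟨h1, h2, h3⟩
    · rintro ⟨h1, h2, h3⟩; exact ⟨⟨h1, h2⟩, h3⟩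
  rw [Finset.sum_congr rfl h1]
  unfold gseq
  symm
  apply Finset.sum_subset
  · intro x hx
    rw [Finset.mem_range] at hx ⊢
    omega
  · intro j hj hj2
    rw [Finset.mem_range] at hj hj2
    exact fseq_vanish _ m j (by omega)

lemma NLtot {k : ℕ} (π : Equiv.Perm (Fin k)) (hπ : Avoids perm231 π) (m : ℕ) :
    (univ.filter (fun σ : Equiv.Perm (Fin (k+m)) =>
      Avoids perm231 σ ∧ IsOccAt π σ (k+m-k))).card = gseq m (lrMax π) := by
  have hr0k : lrMax π ≤ k := lrMax_le π
  rw [Finset.card_eq_sum_card_fiberwise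
    (f := fun σ : Equiv.Perm (Fin (k+m)) => lrMax σ) (t := Finset.range (k+m+1))
    (by intro σ _
        show lrMax σ ∈ Finset.range (k+m+1)
        rw [Finset.mem_range]
        exact Nat.lt_succ_of_le (lrMax_le σ))]
  have h1 : ∀ j ∈ Finset.range (k+m+1),
      ((univ.filter (fun σ : Equiv.Perm (Fin (k+m)) =>
        Avoids perm231 σ ∧ IsOccAt π σ (k+m-k))).filter
          (fun σ => lrMax σ = j)).card = fseq (lrMax π) m j := by
    intro j _
    rw [← NL_eq π hπ m j]
    unfold NL
    rw [Finset.filter_filter]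
    congr 1
    apply Finset.filter_congr
    intro σ _
    constructor
    · rintro ⟨⟨h1, h2⟩, h3⟩; exact ⟨h1, h2, h3⟩
    · rintro ⟨h1, h2, h3⟩; exact ⟨⟨h1, h2⟩, h3⟩
  rw [Finset.sum_congr rfl h1]
  unfold gseq
  symm
  apply Finset.sum_subset
  · intro x hx
    rw [Finset.mem_range] at hx ⊢
    omega
  · intro j hj hj2
    rw [Finset.mem_range] at hj hj2
    exact fseq_vanish _ m j (by omega)

lemma fseq_zero' (r0 r : ℕ) : fseq r0 0 r = if r = r0 then 1 else 0 := rfl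
lemma fseq_succ' (r0 m r : ℕ) : fseq r0 (m+1) r
    = if 1 ≤ r then ∑ j ∈ Finset.Icc (r-1) (r0+m), fseq r0 m j else 0 := rfl

lemma fseq_firststep : ∀ m r0 r, fseq r0 (m+1) r = ∑ r' ∈ Finset.Icc 1 (r0+1), fseq r' m r := by
  intro m
  induction m with
  | zero =>
    intro r0 r
    rw [fseq_succ']
    by_cases h1 : 1 ≤ r
    · rw [if_pos h1]
      simp only [fseq_zero']
      rw [Finset.sum_ite_eq' (Finset.Icc (r-1) (r0+0)) r0 (fun _ => 1)]
      rw [Finset.sum_ite_eq (Finset.Icc 1 (r0+1)) r (fun _ => 1)]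
      simp only [Finset.mem_Icc]
      split_ifs <;> omega
    · rw [if_neg h1]
      symm
      apply Finset.sum_eq_zero
      intro r' hr'
      rw [Finset.mem_Icc] at hr'
      rw [fseq_zero', if_neg (by omega)]
  | succ m ih =>
    intro r0 r
    rw [fseq_succ']
    by_cases h1 : 1 ≤ r
    · rw [if_pos h1]
      rw [Finset.sum_congr rfl (fun j _ => ih r0 j), Finset.sum_comm]
      apply Finset.sum_congr rfl
      intro r' hr'
      rw [Finset.mem_Icc] at hr'
      rw [fseq_succ', if_pos h1]
      symm
      apply Finset.sum_subset
      · apply Finset.Icc_subset_Icc_right; omega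
      · intro j hj hj2
        rw [Finset.mem_Icc] at hj hj2
        exact fseq_vanish _ m j (by omega)
    · rw [if_neg h1]
      symm
      apply Finset.sum_eq_zero
      intro r' hr'
      rw [fseq_succ', if_neg h1]

lemma gseq_rec (m r0 : ℕ) : gseq (m+1) r0 = ∑ r' ∈ Finset.Icc 1 (r0+1), gseq m r' := by
  unfold gseq
  have h1 : ∑ r ∈ Finset.range (r0+(m+1)+1), fseq r0 (m+1) r
      = ∑ r ∈ Finset.range (r0+(m+1)+1), ∑ r' ∈ Finset.Icc 1 (r0+1), fseq r' m r :=
    Finset.sum_congr rfl (fun r _ => fseq_firststep m r0 r)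
  rw [h1, Finset.sum_comm]
  apply Finset.sum_congr rfl
  intro r' hr'
  rw [Finset.mem_Icc] at hr'
  symm
  apply Finset.sum_subset
  · intro x hx
    rw [Finset.mem_range] at hx ⊢
    omega
  · intro j hj hj2
    rw [Finset.mem_range] at hj hj2
    exact fseq_vanish _ m j (by omega)

/-- partial sums -/
noncomputable def Pp (M r0 : ℕ) : ℝ := ∑ m ∈ Finset.range M, (gseq m r0 : ℝ) / 4^m

lemma geom_sum_Icc (t : ℕ) : ∑ r' ∈ Finset.Icc 1 (t+1), (2:ℝ)^(r'+1) = 2^(t+3) - 4 := by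
  induction t with
  | zero => norm_num
  | succ t ih =>
    rw [Finset.sum_Icc_succ_top (by omega : 1 ≤ t+2), ih]
    ring_nf

lemma Pp_rec (M r0 : ℕ) : Pp (M+1) r0 = 1 + (1/4) * ∑ r' ∈ Finset.Icc 1 (r0+1), Pp M r' := by
  unfold Pp
  rw [Finset.sum_range_succ']
  have h0 : (gseq 0 r0 : ℝ) / 4^0 = 1 := by rw [gseq_zero]; norm_num
  rw [h0]
  have h1 : ∀ m, (gseq (m+1) r0 : ℝ) / 4^(m+1)
      = (1/4) * ∑ r' ∈ Finset.Icc 1 (r0+1), (gseq m r' : ℝ) / 4^m := by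
    intro m
    rw [gseq_rec m r0]
    rw [Finset.mul_sum]
    push_cast
    rw [Finset.sum_div]
    apply Finset.sum_congr rfl
    intro r' _
    rw [pow_succ]
    ring
  rw [Finset.sum_congr rfl (fun m _ => h1 m)]
  rw [← Finset.mul_sum, Finset.sum_comm]
  ring

lemma Pp_nonneg (M r0 : ℕ) : 0 ≤ Pp M r0 := by
  apply Finset.sum_nonneg
  intro m _
  positivity

lemma Pp_bound : ∀ M r0, Pp M r0 ≤ 2^(r0+1) := by
  intro M
  induction M with
  | zero => intro r0; unfold Pp; simp
  | succ M ih =>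
    intro r0
    rw [Pp_rec]
    have h1 : ∑ r' ∈ Finset.Icc 1 (r0+1), Pp M r' ≤ ∑ r' ∈ Finset.Icc 1 (r0+1), (2:ℝ)^(r'+1) :=
      Finset.sum_le_sum (fun r' _ => ih r')
    rw [geom_sum_Icc r0] at h1
    have h2 : (2:ℝ)^(r0+3) = 2^(r0+1) * 4 := by rw [show r0+3 = (r0+1)+2 by omega, pow_add]; norm_num
    nlinarith

lemma Pp_mono (r0 : ℕ) : Monotone (fun M => Pp M r0) := by
  apply monotone_nat_of_le_succ
  intro M
  unfold Pp
  rw [Finset.sum_range_succ]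
  have : (0:ℝ) ≤ (gseq M r0 : ℝ) / 4^M := by positivity
  linarith

noncomputable def Ls (r0 : ℕ) : ℝ := ⨆ M, Pp M r0

lemma Ls_bdd (r0 : ℕ) : BddAbove (Set.range fun M => Pp M r0) := by
  refine ⟨2^(r0+1), ?_⟩
  rintro x ⟨M, rfl⟩
  exact Pp_bound M r0

lemma Ls_tendsto (r0 : ℕ) : Filter.Tendsto (fun M => Pp M r0) Filter.atTop (nhds (Ls r0)) :=
  tendsto_atTop_ciSup (Pp_mono r0) (Ls_bdd r0)

lemma Ls_le (r0 : ℕ) : Ls r0 ≤ 2^(r0+1) := ciSup_le (fun M => Pp_bound M r0)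

lemma Ls_nonneg (r0 : ℕ) : 0 ≤ Ls r0 := by
  have := le_ciSup (Ls_bdd r0) 0
  have h0 : Pp 0 r0 = 0 := by unfold Pp; simp
  rw [h0] at this
  exact this

lemma Ls_eqn (r0 : ℕ) : Ls r0 = 1 + (1/4) * ∑ r' ∈ Finset.Icc 1 (r0+1), Ls r' := by
  have t1 : Filter.Tendsto (fun M => Pp (M+1) r0) Filter.atTop (nhds (Ls r0)) := by
    exact (Filter.tendsto_add_atTop_iff_nat 1).mpr (Ls_tendsto r0)
  have t2 : Filter.Tendsto (fun M => 1 + (1/4) * ∑ r' ∈ Finset.Icc 1 (r0+1), Pp M r')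
      Filter.atTop (nhds (1 + (1/4) * ∑ r' ∈ Finset.Icc 1 (r0+1), Ls r')) := by
    apply Filter.Tendsto.const_add
    apply Filter.Tendsto.const_mul
    exact tendsto_finset_sum _ (fun r' _ => Ls_tendsto r')
  have heq : (fun M => Pp (M+1) r0)
      = (fun M => 1 + (1/4) * ∑ r' ∈ Finset.Icc 1 (r0+1), Pp M r') := by
    funext M; exact Pp_rec M r0
  rw [heq] at t1
  exact tendsto_nhds_unique t1 t2

noncomputable def dd (r0 : ℕ) : ℝ := 2^(r0+1) - Ls r0

lemma dd_nonneg (r0 : ℕ) : 0 ≤ dd r0 := by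
  have := Ls_le r0; unfold dd; linarith

lemma dd_le (r0 : ℕ) : dd r0 ≤ 2^(r0+1) := by
  have := Ls_nonneg r0; unfold dd; linarith

lemma dd_eqn (r0 : ℕ) : dd r0 = (1/4) * ∑ r' ∈ Finset.Icc 1 (r0+1), dd r' := by
  unfold dd
  have h1 : ∑ r' ∈ Finset.Icc 1 (r0+1), ((2:ℝ)^(r'+1) - Ls r')
      = (2^(r0+3) - 4) - ∑ r' ∈ Finset.Icc 1 (r0+1), Ls r' := by
    rw [Finset.sum_sub_distrib, geom_sum_Icc r0]
  rw [h1]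
  have h2 := Ls_eqn r0
  have h3 : (2:ℝ)^(r0+3) = 2^(r0+1) * 4 := by
    rw [show r0+3 = (r0+1)+2 by omega, pow_add]; norm_num
  rw [h2]
  linarith

lemma dd_one : dd 1 = 4 * dd 0 := by
  have h0 := dd_eqn 0
  rw [show (0:ℕ)+1 = 1 by rfl, Finset.Icc_self, Finset.sum_singleton] at h0
  linarith

lemma dd_two_step (r : ℕ) : dd (r+2) = 4 * (dd (r+1) - dd r) := by
  have h1 := dd_eqn (r+1)
  have h2 := dd_eqn r
  rw [Finset.sum_Icc_succ_top (by omega : 1 ≤ r+1+1)] at h1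
  have : r+1+1 = r+2 := rfl
  rw [this] at h1
  linarith

lemma dd_form : ∀ r : ℕ, dd r = dd 0 * ((r:ℝ)+1) * 2^r := by
  have key : ∀ r : ℕ, dd r = dd 0 * ((r:ℝ)+1) * 2^r
      ∧ dd (r+1) = dd 0 * ((r:ℝ)+2) * 2^(r+1) := by
    intro r
    induction r with
    | zero =>
      constructor
      · simp
      · rw [dd_one]; push_cast; ring
    | succ r ih =>
      obtain ⟨ih1, ih2⟩ := ih
      constructor
      · rw [ih2]; push_cast; ring
      · rw [show r+1+1 = r+2 by rfl, dd_two_step r, ih1, ih2]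
        rw [pow_succ, pow_succ]
        push_cast
        ring
  exact fun r => (key r).1

lemma dd_zero : dd 0 = 0 := by
  by_contra h
  have hpos : 0 < dd 0 := lt_of_le_of_ne (dd_nonneg 0) (Ne.symm h)
  obtain ⟨N, hN⟩ := exists_nat_gt (2 / dd 0)
  have h1 := dd_form N
  have h2 := dd_le N
  have h3 : (0:ℝ) < 2^N := by positivity
  have h4 : dd 0 * ((N:ℝ)+1) * 2^N ≤ 2^(N+1) := by rw [← h1]; exact h2
  rw [pow_succ] at h4
  have h5 : dd 0 * ((N:ℝ)+1) ≤ 2 := by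
    nlinarith
  have h6 : 2 / dd 0 < (N:ℝ) + 1 := by linarith
  rw [div_lt_iff₀ hpos] at h6
  nlinarith

lemma Ls_val (r0 : ℕ) : Ls r0 = 2^(r0+1) := by
  have h1 := dd_form r0
  rw [dd_zero] at h1
  simp at h1
  unfold dd at h1
  linarith

lemma gseq_hasSum (r0 : ℕ) : HasSum (fun m => (gseq m r0 : ℝ) / 4^m) (2^(r0+1)) := by
  have hsummable : Summable (fun m => (gseq m r0 : ℝ) / 4^m) := by
    apply summable_of_sum_range_le (c := 2^(r0+1))
    · intro m; positivity
    · intro M; exact Pp_bound M r0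
  have h1 := hsummable.hasSum
  have h2 := h1.tendsto_sum_nat
  have h3 : Filter.Tendsto (fun M => ∑ m ∈ Finset.range M, (gseq m r0 : ℝ) / 4^m)
      Filter.atTop (nhds (Ls r0)) := Ls_tendsto r0
  have h4 : ∑' m, (gseq m r0 : ℝ) / 4^m = Ls r0 := tendsto_nhds_unique h2 h3
  rw [← Ls_val r0, ← h4]
  exact h1

lemma sum_ind_gen {k N : ℕ} (π : Equiv.Perm (Fin k)) (i : ℕ) :
    (∑ σ ∈ AvSet perm231 N, (if IsOccAt π σ i then ((1:ℝ)/4) ^ N else 0))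
      = ((univ.filter (fun σ : Equiv.Perm (Fin N) =>
          Avoids perm231 σ ∧ IsOccAt π σ i)).card : ℝ) * ((1:ℝ)/4)^N := by
  unfold AvSet
  rw [Finset.sum_filter]
  have h1 : ∀ σ : Equiv.Perm (Fin N),
      (if Avoids perm231 σ then (if IsOccAt π σ i then ((1:ℝ)/4)^N else 0) else 0)
      = if Avoids perm231 σ ∧ IsOccAt π σ i then ((1:ℝ)/4)^N else 0 := by
    intro σ
    by_cases hA : Avoids perm231 σ <;> by_cases hO : IsOccAt π σ i <;> simp [hA, hO]
  rw [Finset.sum_congr rfl (fun σ _ => h1 σ), ← Finset.sum_filter, Finset.sum_const,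
    nsmul_eq_mul]

lemma occ_small {k N : ℕ} (π : Equiv.Perm (Fin k)) (hk : 1 ≤ k) (hN : N < k) (i : ℕ)
    (σ : Equiv.Perm (Fin N)) : ¬ IsOccAt π σ i := by
  rintro ⟨h1, -⟩
  omega

theorem main_result
    {k : ℕ} (hk : 1 ≤ k) (π : Equiv.Perm (Fin k)) (hπ : Avoids perm231 π) :
    (∑' n : ℕ, ∑ σ ∈ AvSet perm231 n,
        (if IsOccAt π σ 0 then ((1 : ℝ) / 4) ^ n else 0))
      = 2 ^ (rlMax π + 1) / 2 ^ (2 * k)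
    ∧ (∑' n : ℕ, ∑ σ ∈ AvSet perm231 n,
        (if IsOccAt π σ (n - k) then ((1 : ℝ) / 4) ^ n else 0))
      = 2 ^ (lrMax π + 1) / 2 ^ (2 * k) := by
  have hinj : Function.Injective (fun m : ℕ => k + m) := fun a b h => Nat.add_left_cancel h
  have hpow : ∀ r0 : ℕ, ((1:ℝ)/4)^k * 2^(r0+1) = 2 ^ (r0 + 1) / 2 ^ (2 * k) := by
    intro r0
    rw [div_pow, one_pow, show (4:ℝ) = 2^2 by norm_num, ← pow_mul]
    ring
  constructor
  · set a : ℕ → ℝ := fun N => ∑ σ ∈ AvSet perm231 N,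
      (if IsOccAt π σ 0 then ((1 : ℝ) / 4) ^ N else 0) with ha
    have hzero : ∀ N, N ∉ Set.range (fun m : ℕ => k + m) → a N = 0 := by
      intro N hN
      have hNk : N < k := by
        by_contra hc
        exact hN ⟨N - k, by show k + (N - k) = N; omega⟩
      rw [ha]
      apply Finset.sum_eq_zero
      intro σ _
      rw [if_neg (occ_small π hk hNk 0 σ)]
    have hshift : HasSum (fun m => a (k+m)) (((1:ℝ)/4)^k * 2^(rlMax π + 1)) := by
      have h := (gseq_hasSum (rlMax π)).mul_left (((1:ℝ)/4)^k)
      have he : (fun m => ((1:ℝ)/4)^k * ((gseq m (rlMax π) : ℝ)/4^m)) = fun m => a (k+m) := by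
        funext m
        rw [ha]
        show _ = ∑ σ ∈ AvSet perm231 (k+m), (if IsOccAt π σ 0 then ((1:ℝ)/4)^(k+m) else 0)
        rw [sum_ind_gen π 0]
        rw [show (univ.filter (fun σ : Equiv.Perm (Fin (k+m)) =>
          Avoids perm231 σ ∧ IsOccAt π σ 0)).card = gseq m (rlMax π) from NAtot π hπ m]
        rw [pow_add]
        have h4 : ((1:ℝ)/4)^m = 1/4^m := by rw [div_pow, one_pow]
        rw [h4]
        ring
      rw [← he]
      exact h
    have htot : HasSum a (((1:ℝ)/4)^k * 2^(rlMax π + 1)) :=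
      (hinj.hasSum_iff hzero).1 hshift
    rw [← hpow (rlMax π)]
    exact htot.tsum_eq
  · set a : ℕ → ℝ := fun N => ∑ σ ∈ AvSet perm231 N,
      (if IsOccAt π σ (N - k) then ((1 : ℝ) / 4) ^ N else 0) with ha
    have hzero : ∀ N, N ∉ Set.range (fun m : ℕ => k + m) → a N = 0 := by
      intro N hN
      have hNk : N < k := by
        by_contra hc
        exact hN ⟨N - k, by show k + (N - k) = N; omega⟩
      rw [ha]
      apply Finset.sum_eq_zero
      intro σ _
      rw [if_neg (occ_small π hk hNk (N-k) σ)]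
    have hshift : HasSum (fun m => a (k+m)) (((1:ℝ)/4)^k * 2^(lrMax π + 1)) := by
      have h := (gseq_hasSum (lrMax π)).mul_left (((1:ℝ)/4)^k)
      have he : (fun m => ((1:ℝ)/4)^k * ((gseq m (lrMax π) : ℝ)/4^m)) = fun m => a (k+m) := by
        funext m
        rw [ha]
        show _ = ∑ σ ∈ AvSet perm231 (k+m), (if IsOccAt π σ (k+m-k) then ((1:ℝ)/4)^(k+m) else 0)
        rw [sum_ind_gen π (k+m-k)]
        rw [show (univ.filter (fun σ : Equiv.Perm (Fin (k+m)) =>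
          Avoids perm231 σ ∧ IsOccAt π σ (k+m-k))).card = gseq m (lrMax π) from NLtot π hπ m]
        rw [pow_add]
        have h4 : ((1:ℝ)/4)^m = 1/4^m := by rw [div_pow, one_pow]
        rw [h4]
        ring
      rw [← he]
      exact h
    have htot : HasSum a (((1:ℝ)/4)^k * 2^(lrMax π + 1)) :=
      (hinj.hasSum_iff hzero).1 hshift
    rw [← hpow (lrMax π)]
    exact htot.tsum_eq

end AuxDev

/-- **Observation 4.11.** For every pattern `π ∈ Av(231)`,
`Σ_{σ ∈ Av(231)} 4^(−|σ|) 𝟙{pat_{[1,|π|]}(σ) = π} = 2^(|RLMax(π)|+1)/2^(2|π|)` and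
`Σ_{σ ∈ Av(231)} 4^(−|σ|) 𝟙{pat_{[|σ|−|π|+1,|σ|]}(σ) = π} = 2^(|LRMax(π)|+1)/2^(2|π|)`
(the indicators also require `|σ| ≥ |π|`, which is part of `IsOccAt`). -/
theorem critical_GW_begin_end_pattern_probability
    {k : ℕ} (hk : 1 ≤ k) (π : Equiv.Perm (Fin k)) (hπ : Avoids perm231 π) :
    (∑' n : ℕ, ∑ σ ∈ AvSet perm231 n,
        (if IsOccAt π σ 0 then ((1 : ℝ) / 4) ^ n else 0))
      = 2 ^ (rlMax π + 1) / 2 ^ (2 * k)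
    ∧ (∑' n : ℕ, ∑ σ ∈ AvSet perm231 n,
        (if IsOccAt π σ (n - k) then ((1 : ℝ) / 4) ^ n else 0))
      = 2 ^ (lrMax π + 1) / 2 ^ (2 * k) := by
  exact main_result hk π hπ
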